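/- The total number of walks of length n with steps W=(-1,0), N=(0,1), SE=(1,-1) that start at (0,0) and stay in the quarter plane (with arbitrary endpoint) equals the n-th Motzkin number, i.e. the sum over k from 0 to floor(n/2) of C(n,2k)·C(2k,k)/(k+1). -/

import Mathlib

/-- Number of quarter-plane walks of length `n` with steps in `S`, starting at `(0,0)`,
staying in the quarter plane, with arbitrary endpoint. -/
noncomputable def qwalkTotal (S : Set (ℤ × ℤ)) (n : ℕ) : ℕ :=
  Nat.card {w : Fin (n + 1) → ℤ × ℤ //
    w 0 = (0, 0) ∧
    (∀ i : Fin n, w i.succ - w i.castSucc ∈ S) ∧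
    (∀ i, 0 ≤ (w i).1 ∧ 0 ≤ (w i).2)}

/-- The `n`-th Motzkin number. -/
def motzkin (n : ℕ) : ℕ :=
  ∑ k ∈ Finset.range (n / 2 + 1), n.choose (2 * k) * ((2 * k).choose k / (k + 1))

namespace WalkAux


def MT : ℕ → ℕ → ℕ
  | 0, 0 => 1
  | 0, _ + 1 => 0
  | n + 1, 0 => MT n 0 + MT n 1
  | n + 1, j + 1 => MT n j + MT n (j + 1) + MT n (j + 2)

def B : ℕ → ℕ → ℕ
  | 0, _ => 1
  | k + 1, 0 => B k 1
  | k + 1, j + 1 => B (k + 1) j + B k (j + 2)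
  termination_by k j => (k, j)

@[simp] lemma B_zero (j : ℕ) : B 0 j = 1 := by rw [B]
@[simp] lemma B_succ_zero (k : ℕ) : B (k + 1) 0 = B k 1 := by rw [B]
@[simp] lemma B_succ_succ (k j : ℕ) : B (k + 1) (j + 1) = B (k + 1) j + B k (j + 2) := by
  conv_lhs => rw [B]

lemma B_choose (k j : ℕ) :
    B (k + 1) j + (2 * k + 2 + j).choose k = (2 * k + 2 + j).choose (k + 1) := by
  cases j with
  | zero =>
    cases k with
    | zero => simp [Nat.choose]
    | succ m =>
      have ih := B_choose m 1
      rw [show 2 * m + 2 + 1 = 2 * m + 3 by ring] at ih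
      rw [B_succ_zero, show 2 * (m + 1) + 2 + 0 = (2 * m + 3) + 1 by ring,
        Nat.choose_succ_succ (2 * m + 3) m, show m + 1 + 1 = m + 2 from rfl,
        Nat.choose_succ_succ (2 * m + 3) (m + 1)]
      have sym : (2 * m + 3).choose (m + 2) = (2 * m + 3).choose (m + 1) := by
        rw [show m + 1 = (2 * m + 3) - (m + 2) by omega]
        exact (Nat.choose_symm (by omega)).symm
      simp only [Nat.succ_eq_add_one, show m + 1 + 1 = m + 2 from rfl] at *
      omega
  | succ j =>
    have ih1 := B_choose k j
    have hsplit : B (k + 1) (j + 1) = B (k + 1) j + B k (j + 2) := B_succ_succ _ _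
    have p1 : (2 * k + 2 + (j + 1)).choose (k + 1) =
        (2 * k + 2 + j).choose k + (2 * k + 2 + j).choose (k + 1) := by
      rw [show 2 * k + 2 + (j + 1) = (2 * k + 2 + j) + 1 by ring]
      exact Nat.choose_succ_succ _ _
    cases k with
    | zero =>
      simp only [Nat.succ_eq_add_one, B_zero, Nat.choose_zero_right] at *
      omega
    | succ m =>
      have ih2 := B_choose m (j + 2)
      rw [show 2 * m + 2 + (j + 2) = 2 * (m + 1) + 2 + j by ring] at ih2
      have p2 : (2 * (m + 1) + 2 + (j + 1)).choose (m + 1) =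
          (2 * (m + 1) + 2 + j).choose m + (2 * (m + 1) + 2 + j).choose (m + 1) := by
        rw [show 2 * (m + 1) + 2 + (j + 1) = (2 * (m + 1) + 2 + j) + 1 by ring]
        exact Nat.choose_succ_succ _ _
      simp only [Nat.succ_eq_add_one, show m + 1 + 1 = m + 2 from rfl] at *
      omega
  termination_by (k, j)

lemma B_eq_catalan (k : ℕ) : B k 0 = catalan k := by
  cases k with
  | zero => simp
  | succ m =>
    have h := B_choose m 0
    rw [Nat.add_zero] at h
    have hr := Nat.choose_succ_right_eq (2 * m + 2) m
    rw [show 2 * m + 2 - m = m + 2 by omega] at hr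
    have hc : (m + 2) * catalan (m + 1) = (2 * m + 2).choose (m + 1) := by
      have := succ_mul_catalan_eq_centralBinom (m + 1)
      rwa [Nat.centralBinom, show 2 * (m + 1) = 2 * m + 2 by ring] at this
    have key : ((m : ℤ) + 2) * (B (m + 1) 0) = ((m : ℤ) + 2) * (catalan (m + 1)) := by
      have h' : (B (m + 1) 0 : ℤ) + (2 * m + 2).choose m = (2 * m + 2).choose (m + 1) := by
        exact_mod_cast congrArg (Nat.cast : ℕ → ℤ) h
      have hr' : ((2 * m + 2).choose (m + 1) : ℤ) * (m + 1) =
          ((2 * m + 2).choose m : ℤ) * (m + 2) := by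
        exact_mod_cast congrArg (Nat.cast : ℕ → ℤ) hr
      have hc' : ((m : ℤ) + 2) * (catalan (m + 1) : ℤ) = ((2 * m + 2).choose (m + 1) : ℤ) := by
        exact_mod_cast congrArg (Nat.cast : ℕ → ℤ) hc
      linear_combination ((m : ℤ) + 2) * h' + hr' - hc'
    have := mul_left_cancel₀ (a := (m : ℤ) + 2) (by positivity) key
    exact_mod_cast this

def F (n j : ℕ) : ℕ := ∑ k ∈ Finset.range (n + 1), n.choose (2 * k + j) * B k j

lemma F_succ_zero (n : ℕ) : F (n + 1) 0 = F n 0 + F n 1 := by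
  have h1 : F (n + 1) 0 =
      (∑ k ∈ Finset.range (n + 1), (n.choose (2 * k + 1) * B k 1 +
        n.choose (2 * k + 2) * B k 1)) + 1 := by
    show ∑ k ∈ Finset.range (n + 2), (n + 1).choose (2 * k + 0) * B k 0 = _
    rw [Finset.sum_range_succ']
    congr 1
    · apply Finset.sum_congr rfl
      intro k _
      rw [B_succ_zero, show 2 * (k + 1) + 0 = (2 * k + 1) + 1 by ring,
        Nat.choose_succ_succ n (2 * k + 1), Nat.add_mul,
        show 2 * k + 1 + 1 = 2 * k + 2 from rfl]
    · simp
  have h2 : F n 0 = (∑ k ∈ Finset.range n, n.choose (2 * k + 2) * B k 1) + 1 := by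
    show ∑ k ∈ Finset.range (n + 1), n.choose (2 * k + 0) * B k 0 = _
    rw [Finset.sum_range_succ']
    congr 1
    · apply Finset.sum_congr rfl
      intro k _
      rw [B_succ_zero, show 2 * (k + 1) + 0 = 2 * k + 2 by ring]
    · simp
  have h3 : ∑ k ∈ Finset.range (n + 1), n.choose (2 * k + 2) * B k 1 =
      ∑ k ∈ Finset.range n, n.choose (2 * k + 2) * B k 1 := by
    rw [Finset.sum_range_succ, Nat.choose_eq_zero_of_lt (show n < 2 * n + 2 by omega)]
    simp
  have h4 : F n 1 = ∑ k ∈ Finset.range (n + 1), n.choose (2 * k + 1) * B k 1 := rfl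
  rw [h1, Finset.sum_add_distrib, h3, h2, h4]
  omega

lemma F_succ_succ (n j : ℕ) : F (n + 1) (j + 1) = F n j + F n (j + 1) + F n (j + 2) := by
  have h1 : F (n + 1) (j + 1) = ∑ k ∈ Finset.range (n + 2),
      (n.choose (2 * k + j) * B k (j + 1) + n.choose (2 * k + j + 1) * B k (j + 1)) := by
    show ∑ k ∈ Finset.range (n + 2), (n + 1).choose (2 * k + (j + 1)) * B k (j + 1) = _
    apply Finset.sum_congr rfl
    intro k _
    rw [show 2 * k + (j + 1) = (2 * k + j) + 1 by ring, Nat.choose_succ_succ n (2 * k + j),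
      Nat.add_mul]
  rw [h1, Finset.sum_add_distrib]
  have h2 : ∑ k ∈ Finset.range (n + 2), n.choose (2 * k + j + 1) * B k (j + 1) =
      F n (j + 1) := by
    rw [Finset.sum_range_succ, Nat.choose_eq_zero_of_lt
      (show n < 2 * (n + 1) + j + 1 by omega)]
    simp only [Nat.zero_mul, Nat.add_zero]
    apply Finset.sum_congr rfl
    intro k _
    rw [show 2 * k + j + 1 = 2 * k + (j + 1) from rfl]
  have h3 : ∑ k ∈ Finset.range (n + 2), n.choose (2 * k + j) * B k (j + 1) =
      F n j + F n (j + 2) := by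
    have bs : ∀ k ∈ Finset.range (n + 2), n.choose (2 * k + j) * B k (j + 1) =
        n.choose (2 * k + j) * B k j +
        (match k with
         | 0 => 0
         | k + 1 => n.choose (2 * (k + 1) + j) * B k (j + 2)) := by
      intro k _
      cases k with
      | zero => simp
      | succ m => rw [B_succ_succ, Nat.mul_add]
    rw [Finset.sum_congr rfl bs, Finset.sum_add_distrib]
    have hA : ∑ k ∈ Finset.range (n + 2), n.choose (2 * k + j) * B k j = F n j := by
      rw [Finset.sum_range_succ, Nat.choose_eq_zero_of_lt
        (show n < 2 * (n + 1) + j by omega)]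
      simp [F]
    have hB : (∑ k ∈ Finset.range (n + 2),
        (match k with
         | 0 => 0
         | k + 1 => n.choose (2 * (k + 1) + j) * B k (j + 2))) = F n (j + 2) := by
      rw [Finset.sum_range_succ']
      show (∑ k ∈ Finset.range (n + 1), n.choose (2 * (k + 1) + j) * B k (j + 2)) + 0 = _
      rw [Nat.add_zero]
      apply Finset.sum_congr rfl
      intro k _
      rw [show 2 * (k + 1) + j = 2 * k + (j + 2) by ring]
    rw [hA, hB]
  rw [h2, h3]
  ring

lemma MT_eq_F (n : ℕ) : ∀ j, MT n j = F n j := by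
  induction n with
  | zero =>
    intro j
    cases j with
    | zero => simp [MT, F]
    | succ j => simp [MT, F, Nat.choose_eq_zero_of_lt]
  | succ n ih =>
    intro j
    cases j with
    | zero => rw [show MT (n + 1) 0 = MT n 0 + MT n 1 from rfl, ih 0, ih 1, F_succ_zero]
    | succ j =>
      rw [show MT (n + 1) (j + 1) = MT n j + MT n (j + 1) + MT n (j + 2) from rfl,
        ih j, ih (j + 1), ih (j + 2), F_succ_succ]




def H (x y n : ℕ) : ℕ := ∑ t ∈ Finset.range (y + 1), MT n (x + t)

def G (x y n : ℕ) : ℕ := ∑ s ∈ Finset.range (x + 1), H s y n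

lemma G_zero (y n : ℕ) : G 0 y n = H 0 y n := by
  rw [G, Finset.sum_range_one]

lemma G_succ (x y n : ℕ) : G (x + 1) y n = G x y n + H (x + 1) y n := by
  rw [G, Finset.sum_range_succ, G]

lemma H_zero (x n : ℕ) : H x 0 n = MT n x := by
  rw [H, Finset.sum_range_one, Nat.add_zero]

lemma H_shift (x y n : ℕ) : H x (y + 1) n = MT n x + H (x + 1) y n := by
  rw [H, Finset.sum_range_succ', Nat.add_zero, add_comm]
  congr 1
  rw [H]
  apply Finset.sum_congr rfl
  intro t _
  congr 1
  ring

lemma H_succ_n (x y n : ℕ) :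
    H (x + 1) y (n + 1) = H x y n + H (x + 1) y n + H (x + 2) y n := by
  have e : ∀ t ∈ Finset.range (y + 1), MT (n + 1) (x + 1 + t) =
      MT n (x + t) + MT n (x + t + 1) + MT n (x + t + 2) := by
    intro t _
    rw [show x + 1 + t = (x + t) + 1 by ring]
    rfl
  have hA : ∑ t ∈ Finset.range (y + 1), MT n (x + t + 1) = H (x + 1) y n := by
    rw [H]; apply Finset.sum_congr rfl; intro t _; congr 1; ring
  have hB : ∑ t ∈ Finset.range (y + 1), MT n (x + t + 2) = H (x + 2) y n := by
    rw [H]; apply Finset.sum_congr rfl; intro t _; congr 1; ring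
  rw [H, Finset.sum_congr rfl e, Finset.sum_add_distrib, Finset.sum_add_distrib, hA, hB]
  rfl

lemma H0_zero_n (n : ℕ) : H 0 0 (n + 1) = H 0 0 n + H 1 0 n := by
  rw [H_zero, H_zero, H_zero]
  rfl

lemma H0_succ_n (y n : ℕ) :
    H 0 (y + 1) (n + 1) = H 0 y n + H 0 (y + 1) n + H 1 (y + 1) n := by
  have e : ∀ t ∈ Finset.range (y + 1), MT (n + 1) (0 + (t + 1)) =
      MT n t + MT n (t + 1) + MT n (t + 2) := by
    intro t _
    rw [Nat.zero_add]
    rfl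
  rw [H, Finset.sum_range_succ', Finset.sum_congr rfl e, Finset.sum_add_distrib,
    Finset.sum_add_distrib]
  have h1 : H 0 y n = ∑ t ∈ Finset.range (y + 1), MT n t := by
    rw [H]; apply Finset.sum_congr rfl; intro t _; rw [Nat.zero_add]
  have h2 : H 0 (y + 1) n = (∑ t ∈ Finset.range (y + 1), MT n (t + 1)) + MT n 0 := by
    rw [H, Finset.sum_range_succ']
    congr 1
    apply Finset.sum_congr rfl; intro t _; rw [Nat.zero_add]
  have h3 : H 1 (y + 1) n = (∑ t ∈ Finset.range (y + 1), MT n (t + 2)) + MT n 1 := by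
    rw [H, Finset.sum_range_succ']
    congr 1
    apply Finset.sum_congr rfl; intro t _; congr 1; ring
  have h4 : MT (n + 1) (0 + 0) = MT n 0 + MT n 1 := rfl
  omega

lemma G_rec_a (n : ℕ) : G 0 0 (n + 1) = G 0 1 n := by
  rw [G_zero, G_zero, H0_zero_n, H_shift, H_zero, H_zero]

lemma G_rec_b (x n : ℕ) : G (x + 1) 0 (n + 1) = G x 0 n + G (x + 1) 1 n := by
  induction x with
  | zero =>
    have a1 : G 1 0 (n + 1) = G 0 0 (n + 1) + H 1 0 (n + 1) := G_succ 0 0 (n + 1)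
    have a2 : G 0 0 (n + 1) = H 0 0 (n + 1) := G_zero _ _
    have a3 := H0_zero_n n
    have a4 : H 1 0 (n + 1) = H 0 0 n + H 1 0 n + H 2 0 n := H_succ_n 0 0 n
    have a5 : G 0 0 n = H 0 0 n := G_zero _ _
    have a6 : G 1 1 n = G 0 1 n + H 1 1 n := G_succ 0 1 n
    have a7 : G 0 1 n = H 0 1 n := G_zero _ _
    have a8 : H 0 1 n = MT n 0 + H 1 0 n := H_shift 0 0 n
    have a9 : H 1 1 n = MT n 1 + H 2 0 n := H_shift 1 0 n
    have a10 : H 0 0 n = MT n 0 := H_zero _ _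
    have a11 : H 1 0 n = MT n 1 := H_zero _ _
    ring_nf at *
    omega
  | succ x ih =>
    have s1 : G (x + 2) 0 (n + 1) = G (x + 1) 0 (n + 1) + H (x + 2) 0 (n + 1) :=
      G_succ (x + 1) 0 (n + 1)
    have s2 : H (x + 2) 0 (n + 1) = H (x + 1) 0 n + H (x + 2) 0 n + H (x + 3) 0 n :=
      H_succ_n (x + 1) 0 n
    have t1 : G (x + 1) 0 n = G x 0 n + H (x + 1) 0 n := G_succ x 0 n
    have t2 : G (x + 2) 1 n = G (x + 1) 1 n + H (x + 2) 1 n := G_succ (x + 1) 1 n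
    have u1 : H (x + 2) 1 n = MT n (x + 2) + H (x + 3) 0 n := H_shift (x + 2) 0 n
    have u2 : H (x + 2) 0 n = MT n (x + 2) := H_zero _ _
    ring_nf at *
    omega

lemma G_rec_c (y n : ℕ) : G 0 (y + 1) (n + 1) = G 0 (y + 2) n + G 1 y n := by
  have c1 : G 0 (y + 1) (n + 1) = H 0 (y + 1) (n + 1) := G_zero _ _
  have c2 := H0_succ_n y n
  have c3 : G 0 (y + 2) n = H 0 (y + 2) n := G_zero _ _
  have c4 : H 0 (y + 2) n = MT n 0 + H 1 (y + 1) n := H_shift 0 (y + 1) n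
  have c5 : G 1 y n = G 0 y n + H 1 y n := G_succ 0 y n
  have c6 : G 0 y n = H 0 y n := G_zero _ _
  have c7 : H 0 (y + 1) n = MT n 0 + H 1 y n := H_shift 0 y n
  ring_nf at *
  omega

lemma G_rec_d (x y n : ℕ) :
    G (x + 1) (y + 1) (n + 1) = G x (y + 1) n + G (x + 1) (y + 2) n + G (x + 2) y n := by
  induction x with
  | zero =>
    have e1 : G 1 (y + 1) (n + 1) = G 0 (y + 1) (n + 1) + H 1 (y + 1) (n + 1) :=
      G_succ 0 (y + 1) (n + 1)
    have e2 : G 0 (y + 1) (n + 1) = H 0 (y + 1) (n + 1) := G_zero _ _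
    have e3 := H0_succ_n y n
    have e4 : H 1 (y + 1) (n + 1) = H 0 (y + 1) n + H 1 (y + 1) n + H 2 (y + 1) n :=
      H_succ_n 0 (y + 1) n
    have e5 : G 0 (y + 1) n = H 0 (y + 1) n := G_zero _ _
    have e6 : G 1 (y + 2) n = G 0 (y + 2) n + H 1 (y + 2) n := G_succ 0 (y + 2) n
    have e6' : G 0 (y + 2) n = H 0 (y + 2) n := G_zero _ _
    have e7a : G 2 y n = G 1 y n + H 2 y n := G_succ 1 y n
    have e7b : G 1 y n = G 0 y n + H 1 y n := G_succ 0 y n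
    have e7c : G 0 y n = H 0 y n := G_zero _ _
    have e8 : H 0 (y + 2) n = MT n 0 + H 1 (y + 1) n := H_shift 0 (y + 1) n
    have e9 : H 1 (y + 2) n = MT n 1 + H 2 (y + 1) n := H_shift 1 (y + 1) n
    have e10 : H 0 (y + 1) n = MT n 0 + H 1 y n := H_shift 0 y n
    have e11 : H 1 (y + 1) n = MT n 1 + H 2 y n := H_shift 1 y n
    have e12 : H 2 (y + 1) n = MT n 2 + H 3 y n := H_shift 2 y n
    ring_nf at *
    omega
  | succ x ih =>
    have s1 : G (x + 2) (y + 1) (n + 1) = G (x + 1) (y + 1) (n + 1) +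
        H (x + 2) (y + 1) (n + 1) := G_succ (x + 1) (y + 1) (n + 1)
    have s2 : H (x + 2) (y + 1) (n + 1) = H (x + 1) (y + 1) n + H (x + 2) (y + 1) n +
        H (x + 3) (y + 1) n := H_succ_n (x + 1) (y + 1) n
    have t1 : G (x + 1) (y + 1) n = G x (y + 1) n + H (x + 1) (y + 1) n := G_succ _ _ _
    have t2 : G (x + 2) (y + 2) n = G (x + 1) (y + 2) n + H (x + 2) (y + 2) n := G_succ _ _ _
    have t3 : G (x + 3) y n = G (x + 2) y n + H (x + 3) y n := G_succ _ _ _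
    have u1 : H (x + 2) (y + 2) n = MT n (x + 2) + H (x + 3) (y + 1) n :=
      H_shift (x + 2) (y + 1) n
    have u2 : H (x + 2) (y + 1) n = MT n (x + 2) + H (x + 3) y n := H_shift (x + 2) y n
    ring_nf at *
    omega



def S' : Set (ℤ × ℤ) := {(-1, 0), (0, 1), (1, -1)}

def Walk (p : ℤ × ℤ) (n : ℕ) : Type :=
  {w : Fin (n + 1) → ℤ × ℤ //
    w 0 = p ∧
    (∀ i : Fin n, w i.succ - w i.castSucc ∈ S') ∧
    (∀ i, 0 ≤ (w i).1 ∧ 0 ≤ (w i).2)}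

instance S'_finite : Finite ↥S' :=
  Set.Finite.to_subtype (Set.Finite.insert _ (Set.Finite.insert _ (Set.finite_singleton _)))

instance walk_finite (p : ℤ × ℤ) (n : ℕ) : Finite (Walk p n) := by
  have hinj : Function.Injective
      (fun w : Walk p n => (fun i : Fin n => (⟨w.1 i.succ - w.1 i.castSucc, w.2.2.1 i⟩ : ↥S'))) := by
    intro w w' h
    apply Subtype.ext
    funext i
    induction i using Fin.induction with
    | zero => rw [w.2.1, w'.2.1]
    | succ j ihj =>
      have h1 : w.1 j.succ - w.1 j.castSucc = w'.1 j.succ - w'.1 j.castSucc := by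
        have := congrFun h j
        exact Subtype.ext_iff.mp this
      have h2 : w.1 j.succ = w.1 j.castSucc + (w.1 j.succ - w.1 j.castSucc) := by ring
      rw [h2, h1, ihj]
      ring
  exact Finite.of_injective _ hinj

lemma fin_one_eq_zero_succ (n : ℕ) : (1 : Fin (n + 2)) = (0 : Fin (n + 1)).succ := by
  apply Fin.ext
  simp

/-- The tail of a walk. -/
def walkTail (p : ℤ × ℤ) (n : ℕ) (q : ℤ × ℤ) (w : Walk p (n + 1)) (hq : w.1 1 = q) :
    Walk q n := by
  refine ⟨fun i => w.1 i.succ, ?_, ?_, ?_⟩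
  · show w.1 (0 : Fin (n + 1)).succ = q
    rw [← fin_one_eq_zero_succ, hq]
  · intro i
    show w.1 i.succ.succ - w.1 i.castSucc.succ ∈ S'
    rw [Fin.succ_castSucc]
    exact w.2.2.1 i.succ
  · intro i
    exact w.2.2.2 i.succ

/-- Prepending a point to a walk. -/
def walkCons (p : ℤ × ℤ) (hp : 0 ≤ p.1 ∧ 0 ≤ p.2) (n : ℕ) (q : ℤ × ℤ) (hq : q - p ∈ S')
    (v : Walk q n) : Walk p (n + 1) := by
  refine ⟨Fin.cases p v.1, by simp, ?_, ?_⟩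
  · intro i
    induction i using Fin.cases with
    | zero =>
      have e0 : ((0 : Fin (n + 1)).castSucc) = (0 : Fin (n + 2)) := rfl
      simp only [Fin.cases_succ, e0, Fin.cases_zero, v.2.1]
      exact hq
    | succ j =>
      simp only [← Fin.succ_castSucc, Fin.cases_succ]
      exact v.2.2.1 j
  · intro i
    induction i using Fin.cases with
    | zero => simpa using hp
    | succ j =>
      simp only [Fin.cases_succ]
      exact v.2.2.2 j




lemma fin_castSucc_zero' (n : ℕ) : ((0 : Fin (n + 1)).castSucc) = (0 : Fin (n + 2)) := by
  apply Fin.ext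
  simp

lemma walk_step0 {p : ℤ × ℤ} {n : ℕ} (w : Walk p (n + 1)) : w.1 1 - w.1 0 ∈ S' := by
  have h := w.2.2.1 0
  rwa [← fin_one_eq_zero_succ, fin_castSucc_zero'] at h

lemma walk_head_eq {p : ℤ × ℤ} {n : ℕ} (w : Walk p (n + 1)) (d : ℤ × ℤ)
    (h : w.1 1 - w.1 0 = d) : w.1 1 = p + d := by
  have h2 := eq_add_of_sub_eq h
  rw [w.2.1] at h2
  rw [h2]
  ring

lemma cons_tail {p : ℤ × ℤ} (hp : 0 ≤ p.1 ∧ 0 ≤ p.2) {n : ℕ} (q : ℤ × ℤ) (hq : q - p ∈ S')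
    (w : Walk p (n + 1)) (hqw : w.1 1 = q) :
    walkCons p hp n q hq (walkTail p n q w hqw) = w := by
  apply Subtype.ext
  funext i
  induction i using Fin.cases with
  | zero =>
    show (Fin.cases p (fun i => w.1 i.succ) : Fin (n + 2) → ℤ × ℤ) 0 = w.1 0
    simp only [Fin.cases_zero]
    exact w.2.1.symm
  | succ j =>
    show (Fin.cases p (fun i => w.1 i.succ) : Fin (n + 2) → ℤ × ℤ) j.succ = w.1 j.succ
    simp

lemma tail_cons {p : ℤ × ℤ} (hp : 0 ≤ p.1 ∧ 0 ≤ p.2) {n : ℕ} (q : ℤ × ℤ) (hq : q - p ∈ S')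
    (v : Walk q n) (hqw : (walkCons p hp n q hq v).1 1 = q) :
    walkTail p n q (walkCons p hp n q hq v) hqw = v := by
  apply Subtype.ext
  funext i
  show (Fin.cases p v.1 : Fin (n + 2) → ℤ × ℤ) i.succ = v.1 i
  simp

lemma cons_head {p : ℤ × ℤ} (hp : 0 ≤ p.1 ∧ 0 ≤ p.2) {n : ℕ} (q : ℤ × ℤ) (hq : q - p ∈ S')
    (v : Walk q n) : (walkCons p hp n q hq v).1 1 = q := by
  show (Fin.cases p v.1 : Fin (n + 2) → ℤ × ℤ) 1 = q
  rw [fin_one_eq_zero_succ]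
  simp only [Fin.cases_succ]
  exact v.2.1

lemma cons_diff {p : ℤ × ℤ} (hp : 0 ≤ p.1 ∧ 0 ≤ p.2) {n : ℕ} (q : ℤ × ℤ) (hq : q - p ∈ S')
    (v : Walk q n) : (walkCons p hp n q hq v).1 1 - (walkCons p hp n q hq v).1 0 = q - p := by
  rw [cons_head, (walkCons p hp n q hq v).2.1]

lemma memA : ((-1, 0) : ℤ × ℤ) ∈ S' := Set.mem_insert _ _
lemma memB : ((0, 1) : ℤ × ℤ) ∈ S' := Set.mem_insert_of_mem _ (Set.mem_insert _ _)
lemma memC : ((1, -1) : ℤ × ℤ) ∈ S' :=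
  Set.mem_insert_of_mem _ (Set.mem_insert_of_mem _ rfl)

lemma stepA {p : ℤ × ℤ} : (p + (-1, 0)) - p ∈ S' := by
  rw [show (p + (-1, 0)) - p = (-1, 0) by ring]; exact memA
lemma stepB {p : ℤ × ℤ} : (p + (0, 1)) - p ∈ S' := by
  rw [show (p + (0, 1)) - p = (0, 1) by ring]; exact memB
lemma stepC {p : ℤ × ℤ} : (p + (1, -1)) - p ∈ S' := by
  rw [show (p + (1, -1)) - p = (1, -1) by ring]; exact memC

def walkEquiv (p : ℤ × ℤ) (hp : 0 ≤ p.1 ∧ 0 ≤ p.2) (n : ℕ) :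
    Walk p (n + 1) ≃ (Walk (p + (-1, 0)) n ⊕ (Walk (p + (0, 1)) n ⊕ Walk (p + (1, -1)) n)) where
  toFun w :=
    if h1 : w.1 1 - w.1 0 = (-1, 0) then
      Sum.inl (walkTail p n _ w (walk_head_eq w _ h1))
    else if h2 : w.1 1 - w.1 0 = (0, 1) then
      Sum.inr (Sum.inl (walkTail p n _ w (walk_head_eq w _ h2)))
    else
      Sum.inr (Sum.inr (walkTail p n _ w (walk_head_eq w (1, -1) (by
        have h := walk_step0 w
        rcases h with h | h | h
        · exact absurd h h1
        · exact absurd h h2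
        · exact h))))
  invFun := Sum.elim (fun v => walkCons p hp n _ stepA v)
    (Sum.elim (fun v => walkCons p hp n _ stepB v) (fun v => walkCons p hp n _ stepC v))
  left_inv w := by
    by_cases h1 : w.1 1 - w.1 0 = (-1, 0)
    · simp only [dif_pos h1, Sum.elim_inl]
      exact cons_tail hp _ stepA w _
    · by_cases h2 : w.1 1 - w.1 0 = (0, 1)
      · simp only [dif_neg h1, dif_pos h2, Sum.elim_inr, Sum.elim_inl]
        exact cons_tail hp _ stepB w _
      · simp only [dif_neg h1, dif_neg h2, Sum.elim_inr]
        exact cons_tail hp _ stepC w _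
  right_inv v := by
    rcases v with v | v | v
    · simp only [Sum.elim_inl]
      have hd : (walkCons p hp n _ stepA v).1 1 - (walkCons p hp n _ stepA v).1 0 = (-1, 0) := by
        rw [cons_diff]; ring
      exact (dif_pos hd).trans (congrArg Sum.inl (tail_cons hp _ stepA v _))
    · simp only [Sum.elim_inr, Sum.elim_inl]
      have hd : (walkCons p hp n _ stepB v).1 1 - (walkCons p hp n _ stepB v).1 0 = (0, 1) := by
        rw [cons_diff]; ring
      have hd' : ¬((walkCons p hp n _ stepB v).1 1 - (walkCons p hp n _ stepB v).1 0
          = (-1, 0)) := by rw [hd]; decide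
      exact (dif_neg hd').trans ((dif_pos hd).trans
        (congrArg (fun x => Sum.inr (Sum.inl x)) (tail_cons hp _ stepB v _)))
    · simp only [Sum.elim_inr]
      have hd : (walkCons p hp n _ stepC v).1 1 - (walkCons p hp n _ stepC v).1 0 = (1, -1) := by
        rw [cons_diff]; ring
      have hd1 : ¬((walkCons p hp n _ stepC v).1 1 - (walkCons p hp n _ stepC v).1 0
          = (-1, 0)) := by rw [hd]; decide
      have hd2 : ¬((walkCons p hp n _ stepC v).1 1 - (walkCons p hp n _ stepC v).1 0
          = (0, 1)) := by rw [hd]; decide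
      exact (dif_neg hd1).trans ((dif_neg hd2).trans
        (congrArg (fun x => Sum.inr (Sum.inr x)) (tail_cons hp _ stepC v _)))

lemma card_walk_succ (p : ℤ × ℤ) (hp : 0 ≤ p.1 ∧ 0 ≤ p.2) (n : ℕ) :
    Nat.card (Walk p (n + 1)) = Nat.card (Walk (p + (-1, 0)) n) +
      Nat.card (Walk (p + (0, 1)) n) + Nat.card (Walk (p + (1, -1)) n) := by
  rw [Nat.card_congr (walkEquiv p hp n), Nat.card_sum, Nat.card_sum]
  ring

lemma card_walk_zero (p : ℤ × ℤ) (hp : 0 ≤ p.1 ∧ 0 ≤ p.2) :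
    Nat.card (Walk p 0) = 1 := by
  have : Unique (Walk p 0) := {
    default := ⟨fun _ => p, rfl, fun i => i.elim0, fun _ => hp⟩
    uniq := by
      intro w
      apply Subtype.ext
      funext i
      rw [Fin.eq_zero i]
      exact w.2.1 }
  exact Nat.card_unique

lemma card_walk_neg (p : ℤ × ℤ) (hp : ¬(0 ≤ p.1 ∧ 0 ≤ p.2)) (n : ℕ) :
    Nat.card (Walk p n) = 0 := by
  have : IsEmpty (Walk p n) := by
    constructor
    intro w
    exact hp (w.2.1 ▸ w.2.2.2 0)
  exact Nat.card_of_isEmpty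



lemma H_pos_n0 (y : ℕ) : ∀ x, H (x + 1) y 0 = 0 := by
  induction y with
  | zero => intro x; rw [H_zero]; rfl
  | succ y ih =>
    intro x
    rw [H_shift, show MT 0 (x + 1) = 0 from rfl, ih (x + 1)]

lemma H0_n0 (y : ℕ) : H 0 y 0 = 1 := by
  cases y with
  | zero => rw [H_zero]; rfl
  | succ y =>
    induction y with
    | zero => rw [H_shift, H_pos_n0]; rfl
    | succ y ih => rw [H_shift, H_pos_n0]; rfl

lemma G_n0 (x y : ℕ) : G x y 0 = 1 := by
  induction x with
  | zero => rw [G_zero, H0_n0]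
  | succ x ih => rw [G_succ, ih, H_pos_n0]

lemma card_walk_G (n : ℕ) : ∀ x y : ℕ, Nat.card (Walk ((x : ℤ), (y : ℤ)) n) = G x y n := by
  induction n with
  | zero =>
    intro x y
    rw [card_walk_zero _ ⟨by positivity, by positivity⟩, G_n0]
  | succ n ih =>
    intro x y
    rw [card_walk_succ _ ⟨by positivity, by positivity⟩ n]
    have pA : ((x : ℤ), (y : ℤ)) + (-1, 0) = ((x : ℤ) - 1, (y : ℤ)) := by
      rw [Prod.mk_add_mk, Prod.mk.injEq]
      constructor <;> ring
    have pB : ((x : ℤ), (y : ℤ)) + (0, 1) = ((x : ℤ), (y : ℤ) + 1) := by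
      rw [Prod.mk_add_mk, Prod.mk.injEq]
      constructor <;> ring
    have pC : ((x : ℤ), (y : ℤ)) + (1, -1) = ((x : ℤ) + 1, (y : ℤ) - 1) := by
      rw [Prod.mk_add_mk, Prod.mk.injEq]
      constructor <;> ring
    rw [pA, pB, pC]
    have hB : Nat.card (Walk ((x : ℤ), (y : ℤ) + 1) n) = G x (y + 1) n := by
      rw [show ((x : ℤ), (y : ℤ) + 1) = (((x : ℕ) : ℤ), (((y + 1 : ℕ)) : ℤ)) by rw [Prod.mk.injEq]; constructor <;> push_cast <;> ring]
      exact ih x (y + 1)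
    cases x with
    | zero =>
      have hA : Nat.card (Walk (((0 : ℕ) : ℤ) - 1, (y : ℤ)) n) = 0 := by
        apply card_walk_neg
        intro hcon
        have h1 := hcon.1
        norm_num at h1
      cases y with
      | zero =>
        have hC : Nat.card (Walk (((0 : ℕ) : ℤ) + 1, ((0 : ℕ) : ℤ) - 1) n) = 0 := by
          apply card_walk_neg
          intro hcon
          have h2 := hcon.2
          norm_num at h2
        rw [hA, hB, hC]
        simp only [show (0 : ℕ) + 1 = 1 from rfl]
        rw [G_rec_a]
        omega
      | succ y =>
        have hC : Nat.card (Walk (((0 : ℕ) : ℤ) + 1, ((y + 1 : ℕ) : ℤ) - 1) n) = G 1 y n := by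
          rw [show ((((0 : ℕ) : ℤ)) + 1, (((y + 1 : ℕ)) : ℤ) - 1) =
            (((1 : ℕ) : ℤ), ((y : ℕ) : ℤ)) by rw [Prod.mk.injEq]; constructor <;> push_cast <;> ring]
          exact ih 1 y
        rw [hA, hB, hC]
        simp only [show ∀ m : ℕ, m + 1 + 1 = m + 2 from fun _ => rfl]
        rw [G_rec_c]
        omega
    | succ x =>
      have hA : Nat.card (Walk (((x + 1 : ℕ) : ℤ) - 1, (y : ℤ)) n) = G x y n := by
        rw [show ((((x + 1 : ℕ) : ℤ)) - 1, ((y : ℕ) : ℤ)) =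
          (((x : ℕ) : ℤ), ((y : ℕ) : ℤ)) by rw [Prod.mk.injEq]; constructor <;> push_cast <;> ring]
        exact ih x y
      cases y with
      | zero =>
        have hC : Nat.card (Walk (((x + 1 : ℕ) : ℤ) + 1, ((0 : ℕ) : ℤ) - 1) n) = 0 := by
          apply card_walk_neg
          intro hcon
          have h2 := hcon.2
          norm_num at h2
        rw [hA, hB, hC]
        simp only [show (0 : ℕ) + 1 = 1 from rfl]
        rw [G_rec_b]
        omega
      | succ y =>
        have hC : Nat.card (Walk (((x + 1 : ℕ) : ℤ) + 1, ((y + 1 : ℕ) : ℤ) - 1) n) =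
            G (x + 2) y n := by
          rw [show ((((x + 1 : ℕ) : ℤ)) + 1, (((y + 1 : ℕ)) : ℤ) - 1) =
            (((x + 2 : ℕ) : ℤ), ((y : ℕ) : ℤ)) by rw [Prod.mk.injEq]; constructor <;> push_cast <;> ring]
          exact ih (x + 2) y
        rw [hA, hB, hC]
        simp only [show ∀ m : ℕ, m + 1 + 1 = m + 2 from fun _ => rfl]
        rw [G_rec_d]

lemma motzkin_eq_F (n : ℕ) :
    (∑ k ∈ Finset.range (n / 2 + 1), n.choose (2 * k) * ((2 * k).choose k / (k + 1))) =
      F n 0 := by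
  have hterm : ∀ k : ℕ, n.choose (2 * k) * ((2 * k).choose k / (k + 1)) =
      n.choose (2 * k + 0) * B k 0 := by
    intro k
    rw [B_eq_catalan, catalan_eq_centralBinom_div, Nat.add_zero]
    rfl
  rw [Finset.sum_congr rfl (fun k _ => hterm k), F]
  apply Finset.sum_subset
  · apply Finset.range_subset_range.mpr
    omega
  · intro k hk hnk
    simp only [Finset.mem_range] at hk hnk
    rw [Nat.choose_eq_zero_of_lt (by omega)]
    simp

end WalkAux

theorem walks_WNSE_total (n : ℕ) :
    qwalkTotal {(-1, 0), (0, 1), (1, -1)} n = motzkin n := by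
  have h1 : Nat.card (WalkAux.Walk (0, 0) n) = WalkAux.G 0 0 n := by
    have := WalkAux.card_walk_G n 0 0
    simpa using this
  have h2 : WalkAux.G 0 0 n = WalkAux.F n 0 := by
    rw [WalkAux.G_zero, WalkAux.H_zero, WalkAux.MT_eq_F]
  unfold qwalkTotal motzkin
  rw [WalkAux.motzkin_eq_F n, ← h2, ← h1]
  rfl
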